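/- Let f : [0,1] → [0,∞) be a continuous excursion function, let n ≥ 6, and suppose there is an interval [s,t] ⊆ [0,1] with s < t such that sup_{u∈[0,1]} |f(s + (t−s)u) − f(s) − √(t−s)·F_n(u)| < √(t−s)·2^{1−n}, where F_n is the zig-zag function. Set G(u) = s + (t−s)u, z = 1/(4n), and y_p = (2p+1)/(2n) for 0 ≤ p ≤ n−2. Then, with respect to the pseudometric d_f(x,y) = f(x) + f(y) − 2·min{f(w) : min{x,y} ≤ w ≤ max{x,y}}: (i) (1/2 − 2^{3−n})√(t−s) ≤ d_f(G(z), G(y_p)) ≤ (1/2 + 2^{3−n})√(t−s) for every p; and (ii) (1 − 2^{3−n})√(t−s) ≤ d_f(G(y_q), G(y_p)) ≤ (1 + 2^{3−n})√(t−s) for all q ≠ p. Consequently, the points x_0 = G(z) and x_p = G(y_{p−1}), 1 ≤ p ≤ n−1, form an (A_n, η_n)-approximate (n−1)-star in ([0,1], d_f) with ρ_n = (1 − 2^{4−n})·(1/2)·√(t−s), A_n = (2 + 2^{4−n})/(1 − 2^{4−n}) > 2, and η_n = (1 + 2^{4−n})/(1 − 2^{4−n}) − 1 ∈ (0, 2/3].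 -/

import Mathlib

open Set

/-- The continuum-tree distance associated to an excursion function `f`. -/
noncomputable def treeDist (f : ℝ → ℝ) (x y : ℝ) : ℝ :=
  f x + f y - 2 * sInf (f '' Set.Icc (min x y) (max x y))

/-- The zig-zag function `F_n : [0,1] → [0,∞)`: `F_n(x) = 2nx` on `[0,1/(2n))`;
`F_n(x) = −nx + (2k+3)/2` on `[(2k+1)/(2n), (k+1)/n)` and `F_n(x) = nx − k − 1/2` on
`[(k+1)/n, (2k+3)/(2n))`, for `0 ≤ k ≤ n−2`; and `F_n(x) = −2nx + 2n` on
`[(2n−1)/(2n), 1]`.  (On the middle part the relevant `k` is recovered from `⌊2nx⌋`.) -/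
noncomputable def zigzag (n : ℕ) (x : ℝ) : ℝ :=
  if x < 1 / (2 * n) then 2 * n * x
  else if (2 * n - 1) / (2 * n) ≤ x then -2 * n * x + 2 * n
  else if ⌊2 * (n : ℝ) * x⌋ % 2 = 1 then
    -(n : ℝ) * x + (2 * (((⌊2 * (n : ℝ) * x⌋ - 1) / 2 : ℤ) : ℝ) + 3) / 2
  else (n : ℝ) * x - ((⌊2 * (n : ℝ) * x⌋ / 2 - 1 : ℤ) : ℝ) - 1 / 2

/-- The points `x 0, …, x m` form an `(A,η)`-approximate `m`-star with scale `ρ` for the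
distance function `d`. -/
def IsApproxStarPts {α : Type*} (d : α → α → ℝ) (A η ρ : ℝ) (m : ℕ)
    (x : Fin (m + 1) → α) : Prop :=
  0 < ρ ∧
  (∀ i j : Fin (m + 1), i ≠ 0 → j ≠ 0 → i ≠ j →
    (A - η) * ρ ≤ d (x i) (x j) ∧ d (x i) (x j) ≤ A * ρ) ∧
  (∀ i : Fin (m + 1), i ≠ 0 → ρ ≤ d (x 0) (x i) ∧ d (x 0) (x i) ≤ (1 + η) * ρ)

lemma treeDist_comm (f : ℝ → ℝ) (x y : ℝ) : treeDist f x y = treeDist f y x := by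
  unfold treeDist; rw [min_comm, max_comm]; ring

lemma zigzag_quarter (n : ℕ) (hn : 1 ≤ n) : zigzag n (1/(4*(n:ℝ))) = 1/2 := by
  have hn0 : (0:ℝ) < n := by exact_mod_cast hn
  unfold zigzag
  rw [if_pos (by rw [div_lt_div_iff₀ (by positivity) (by positivity)]; linarith)]
  field_simp; ring

lemma zigzag_yp (n p : ℕ) (hn : 6 ≤ n) (hp : (p:ℝ) ≤ (n:ℝ) - 2) :
    zigzag n ((2*(p:ℝ)+1)/(2*(n:ℝ))) = 1 := by
  have hn0 : (0:ℝ) < n := by positivity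
  have hfl : (2 * (n:ℝ) * ((2*(p:ℝ)+1)/(2*(n:ℝ)))) = ((2*(p:ℤ)+1 : ℤ) : ℝ) := by
    push_cast; field_simp
  unfold zigzag
  rw [hfl, Int.floor_intCast]
  rw [if_neg (by
    push_neg
    rw [div_le_div_iff₀ (by positivity) (by positivity)]
    nlinarith [Nat.cast_nonneg (α := ℝ) p]), if_neg (by
    push_neg
    rw [div_lt_div_iff₀ (by positivity) (by positivity)]
    nlinarith), if_pos (by omega)]
  have h2 : (2*(p:ℤ)+1-1)/2 = (p:ℤ) := by omega
  rw [h2]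
  field_simp; rw [Int.cast_natCast]; ring

lemma zigzag_node (n k : ℕ) (hn : 6 ≤ n) (hk : (k:ℝ) ≤ (n:ℝ) - 2) :
    zigzag n (((k:ℝ)+1)/(n:ℝ)) = 1/2 := by
  have hn0 : (0:ℝ) < n := by positivity
  have hfl : (2 * (n:ℝ) * (((k:ℝ)+1)/(n:ℝ))) = ((2*(k:ℤ)+2 : ℤ) : ℝ) := by
    push_cast; field_simp
  unfold zigzag
  rw [hfl, Int.floor_intCast]
  rw [if_neg (by
    push_neg
    rw [div_le_div_iff₀ (by positivity) (by positivity)]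
    nlinarith [Nat.cast_nonneg (α := ℝ) k]), if_neg (by
    push_neg
    rw [div_lt_div_iff₀ (by positivity) (by positivity)]
    nlinarith), if_neg (by omega)]
  have h2 : (2*(k:ℤ)+2)/2 - 1 = (k:ℤ) := by omega
  rw [h2]
  field_simp; rw [Int.cast_natCast]; ring

lemma zigzag_lb (n : ℕ) (hn : 1 ≤ n) (u : ℝ) (h1 : 1/(4*(n:ℝ)) ≤ u)
    (h2 : u ≤ (2*(n:ℝ)-3)/(2*(n:ℝ))) : 1/2 ≤ zigzag n u := by
  have hn0 : (0:ℝ) < n := by exact_mod_cast hn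
  unfold zigzag
  split_ifs with ha hb hc
  · have : 2*(n:ℝ)*(1/(4*(n:ℝ))) ≤ 2*n*u := by
      apply mul_le_mul_of_nonneg_left h1; positivity
    have he : 2*(n:ℝ)*(1/(4*(n:ℝ))) = 1/2 := by field_simp; ring
    linarith
  · exfalso
    have : (2*(n:ℝ)-3)/(2*(n:ℝ)) < (2*(n:ℝ)-1)/(2*(n:ℝ)) := by
      rw [div_lt_div_iff₀ (by positivity) (by positivity)]; nlinarith
    linarith
  · set m := ⌊2 * (n:ℝ) * u⌋ with hm
    have hm2 : 2*(n:ℝ)*u < m + 1 := Int.lt_floor_add_one _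
    have hdiv : (2:ℤ)*((m-1)/2) = m - 1 := by omega
    have hdivR : 2*((((m-1)/2 : ℤ)):ℝ) = (m:ℝ) - 1 := by exact_mod_cast hdiv
    rw [hdivR] at *
    linarith
  · set m := ⌊2 * (n:ℝ) * u⌋ with hm
    have hm1 : (m:ℝ) ≤ 2*(n:ℝ)*u := Int.floor_le _
    have hdiv : (2:ℤ)*(m/2 - 1) = m - 2 := by omega
    have hdivR : 2*(((m/2 - 1 : ℤ)):ℝ) = (m:ℝ) - 2 := by exact_mod_cast hdiv
    have : (((m/2 - 1 : ℤ)):ℝ) = ((m:ℝ) - 2)/2 := by linarith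
    rw [this]
    linarith

lemma est (f : ℝ → ℝ) (n : ℕ) (s t : ℝ) (hst : s < t)
    (happrox : ∀ u ∈ Icc (0 : ℝ) 1,
      |f (s + (t - s) * u) - f s - Real.sqrt (t - s) * zigzag n u| <
        Real.sqrt (t - s) * (2 : ℝ) ^ (1 - (n : ℤ)))
    (u₁ u₂ u₀ : ℝ) (h0 : 0 ≤ u₁) (h12 : u₁ ≤ u₂) (h1 : u₂ ≤ 1)
    (hu0 : u₀ ∈ Icc u₁ u₂)
    (hF0 : zigzag n u₀ = 1/2)
    (hlb : ∀ u ∈ Icc u₁ u₂, 1/2 ≤ zigzag n u) :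
    (zigzag n u₁ + zigzag n u₂ - 1) * Real.sqrt (t-s)
        - 4 * (Real.sqrt (t-s) * (2:ℝ)^(1-(n:ℤ)))
      ≤ treeDist f (s+(t-s)*u₁) (s+(t-s)*u₂) ∧
    treeDist f (s+(t-s)*u₁) (s+(t-s)*u₂)
      ≤ (zigzag n u₁ + zigzag n u₂ - 1) * Real.sqrt (t-s)
        + 4 * (Real.sqrt (t-s) * (2:ℝ)^(1-(n:ℤ))) := by
  have hts : 0 < t - s := by linarith
  set σ := Real.sqrt (t-s) with hσdef
  have hσ : 0 < σ := Real.sqrt_pos.mpr hts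
  set ε := σ * (2:ℝ)^(1-(n:ℤ)) with hεdef
  have hε : 0 < ε := by positivity
  set a := s + (t-s)*u₁ with hadef
  set b := s + (t-s)*u₂ with hbdef
  have hab : a ≤ b := by nlinarith
  have key : ∀ w ∈ Icc a b, f s + σ * (1/2) - ε ≤ f w := by
    rintro w ⟨hw1, hw2⟩
    set u := (w - s)/(t - s) with hu
    have hwu : s + (t-s)*u = w := by rw [hu, mul_div_cancel₀ _ hts.ne']; ring
    have hu1 : u₁ ≤ u := by
      rw [hu, le_div_iff₀ hts]; rw [hadef] at hw1; linarith
    have hu2 : u ≤ u₂ := by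
      rw [hu, div_le_iff₀ hts]; rw [hbdef] at hw2; linarith
    have happ := happrox u ⟨le_trans h0 hu1, le_trans hu2 h1⟩
    rw [hwu] at happ
    have habs := abs_lt.mp happ
    have hF : σ * (1/2) ≤ σ * zigzag n u :=
      mul_le_mul_of_nonneg_left (hlb u ⟨hu1, hu2⟩) hσ.le
    linarith [habs.1]
  have hbdd : BddBelow (f '' Icc a b) :=
    ⟨f s + σ*(1/2) - ε, by rintro y ⟨w, hw, rfl⟩; exact key w hw⟩
  have hne : (f '' Icc a b).Nonempty := ⟨f a, a, ⟨le_refl a, hab⟩, rfl⟩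
  have hinf_lb : f s + σ*(1/2) - ε ≤ sInf (f '' Icc a b) :=
    le_csInf hne (by rintro y ⟨w, hw, rfl⟩; exact key w hw)
  have hG0 : s + (t-s)*u₀ ∈ Icc a b :=
    ⟨by rw [hadef]; nlinarith [hu0.1], by rw [hbdef]; nlinarith [hu0.2]⟩
  have hinf_ub : sInf (f '' Icc a b) ≤ f (s + (t-s)*u₀) := csInf_le hbdd ⟨_, hG0, rfl⟩
  have hb0 := abs_lt.mp (happrox u₀ ⟨le_trans h0 hu0.1, le_trans hu0.2 h1⟩)
  rw [hF0] at hb0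
  have ha1 := abs_lt.mp (happrox u₁ ⟨h0, le_trans h12 h1⟩)
  have hb1 := abs_lt.mp (happrox u₂ ⟨le_trans h0 h12, h1⟩)
  have hlo : (zigzag n u₁ + zigzag n u₂ - 1) * σ - 4 * ε
      = σ * zigzag n u₁ + σ * zigzag n u₂ - σ - 4*ε := by ring
  have hhi : (zigzag n u₁ + zigzag n u₂ - 1) * σ + 4 * ε
      = σ * zigzag n u₁ + σ * zigzag n u₂ - σ + 4*ε := by ring
  unfold treeDist
  rw [min_eq_left hab, max_eq_right hab]
  constructor
  · rw [hlo]; linarith [ha1.2, hb1.2, hb0.2, hinf_ub]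
  · rw [hhi]; linarith [ha1.1, hb1.1, hinf_lb]

set_option maxHeartbeats 1000000 in
/-- If a continuous excursion function `f` approximates a rescaled zig-zag
`F_n` (`n ≥ 6`) within `√(t−s)·2^{1−n}` on an interval `[s,t] ⊆ [0,1]`, then, writing
`G(u) = s + (t−s)u`, `z = 1/(4n)` and `y_p = (2p+1)/(2n)`:
(i) `(1/2 − 2^{3−n})√(t−s) ≤ d_f(G z, G y_p) ≤ (1/2 + 2^{3−n})√(t−s)`;
(ii) `(1 − 2^{3−n})√(t−s) ≤ d_f(G y_q, G y_p) ≤ (1 + 2^{3−n})√(t−s)` for `q ≠ p`;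
and consequently the points `x₀ = G z`, `x_p = G y_{p−1}` (`1 ≤ p ≤ n−1`) form an
`(Aₙ, ηₙ)`-approximate `(n−1)`-star in `([0,1], d_f)` with
`ρₙ = (1 − 2^{4−n})·(1/2)·√(t−s)`, `Aₙ = (2+2^{4−n})/(1−2^{4−n}) > 2` and
`ηₙ = (1+2^{4−n})/(1−2^{4−n}) − 1 ∈ (0,2/3]`. -/
theorem zigzag_approx_gives_star (f : ℝ → ℝ)
    (hcont : ContinuousOn f (Icc 0 1))
    (hf0 : f 0 = 0) (hf1 : f 1 = 0)
    (hpos : ∀ u ∈ Ioo (0 : ℝ) 1, 0 < f u)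
    (hnonneg : ∀ u ∈ Icc (0 : ℝ) 1, 0 ≤ f u)
    (n : ℕ) (hn : 6 ≤ n)
    (s t : ℝ) (hs : 0 ≤ s) (hst : s < t) (ht : t ≤ 1)
    (happrox : ∀ u ∈ Icc (0 : ℝ) 1,
      |f (s + (t - s) * u) - f s - Real.sqrt (t - s) * zigzag n u| <
        Real.sqrt (t - s) * (2 : ℝ) ^ (1 - (n : ℤ))) :
    -- (i)
    (∀ p : ℕ, p ≤ n - 2 →
      (1 / 2 - (2 : ℝ) ^ (3 - (n : ℤ))) * Real.sqrt (t - s) ≤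
        treeDist f (s + (t - s) * (1 / (4 * n)))
          (s + (t - s) * ((2 * p + 1) / (2 * n))) ∧
      treeDist f (s + (t - s) * (1 / (4 * n)))
          (s + (t - s) * ((2 * p + 1) / (2 * n))) ≤
        (1 / 2 + (2 : ℝ) ^ (3 - (n : ℤ))) * Real.sqrt (t - s)) ∧
    -- (ii)
    (∀ p q : ℕ, p ≤ n - 2 → q ≤ n - 2 → p ≠ q →
      (1 - (2 : ℝ) ^ (3 - (n : ℤ))) * Real.sqrt (t - s) ≤
        treeDist f (s + (t - s) * ((2 * q + 1) / (2 * n)))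
          (s + (t - s) * ((2 * p + 1) / (2 * n))) ∧
      treeDist f (s + (t - s) * ((2 * q + 1) / (2 * n)))
          (s + (t - s) * ((2 * p + 1) / (2 * n))) ≤
        (1 + (2 : ℝ) ^ (3 - (n : ℤ))) * Real.sqrt (t - s)) ∧
    -- consequently: an approximate (n−1)-star
    (∃ x : Fin ((n - 1) + 1) → ℝ,
      x 0 = s + (t - s) * (1 / (4 * n)) ∧
      (∀ i : Fin ((n - 1) + 1), i ≠ 0 →
        x i = s + (t - s) * ((2 * ((i : ℕ) - 1) + 1) / (2 * n))) ∧
      IsApproxStarPts (treeDist f)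
        ((2 + (2 : ℝ) ^ (4 - (n : ℤ))) / (1 - (2 : ℝ) ^ (4 - (n : ℤ))))
        ((1 + (2 : ℝ) ^ (4 - (n : ℤ))) / (1 - (2 : ℝ) ^ (4 - (n : ℤ))) - 1)
        ((1 - (2 : ℝ) ^ (4 - (n : ℤ))) * (1 / 2) * Real.sqrt (t - s))
        (n - 1) x) ∧
    2 < (2 + (2 : ℝ) ^ (4 - (n : ℤ))) / (1 - (2 : ℝ) ^ (4 - (n : ℤ))) ∧
    0 < (1 + (2 : ℝ) ^ (4 - (n : ℤ))) / (1 - (2 : ℝ) ^ (4 - (n : ℤ))) - 1 ∧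
    (1 + (2 : ℝ) ^ (4 - (n : ℤ))) / (1 - (2 : ℝ) ^ (4 - (n : ℤ))) - 1 ≤ 2 / 3 := by
  have hts : 0 < t - s := by linarith
  have hσ : 0 < Real.sqrt (t - s) := Real.sqrt_pos.mpr hts
  have hn6 : (6:ℝ) ≤ (n:ℝ) := by exact_mod_cast hn
  have hn0 : (0:ℝ) < n := by linarith
  have hc34 : (2:ℝ)^(3-(n:ℤ)) = 4 * (2:ℝ)^(1-(n:ℤ)) := by
    rw [show (3-(n:ℤ)) = 2 + (1-(n:ℤ)) by ring, zpow_add₀ (two_ne_zero)]; norm_num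
  have hc43 : (2:ℝ)^(4-(n:ℤ)) = 2 * (2:ℝ)^(3-(n:ℤ)) := by
    rw [show (4-(n:ℤ)) = 1 + (3-(n:ℤ)) by ring, zpow_add₀ (two_ne_zero)]; norm_num
  have hcle : (2:ℝ)^(4-(n:ℤ)) ≤ 1/4 := by
    calc (2:ℝ)^(4-(n:ℤ)) ≤ (2:ℝ)^(-2:ℤ) :=
          zpow_le_zpow_right₀ one_le_two (by omega)
      _ = 1/4 := by norm_num
  have hcpos : (0:ℝ) < (2:ℝ)^(4-(n:ℤ)) := by positivity
  have h1c : (0:ℝ) < 1 - (2:ℝ)^(4-(n:ℤ)) := by linarith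
  -- part (i)
  have part1 : ∀ p : ℕ, p ≤ n - 2 →
      (1 / 2 - (2 : ℝ) ^ (3 - (n : ℤ))) * Real.sqrt (t - s) ≤
        treeDist f (s + (t - s) * (1 / (4 * n)))
          (s + (t - s) * ((2 * p + 1) / (2 * n))) ∧
      treeDist f (s + (t - s) * (1 / (4 * n)))
          (s + (t - s) * ((2 * p + 1) / (2 * n))) ≤
        (1 / 2 + (2 : ℝ) ^ (3 - (n : ℤ))) * Real.sqrt (t - s) := by
    intro p hp
    have hpn : (p:ℝ) ≤ (n:ℝ) - 2 := by
      have h' : p + 2 ≤ n := by omega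
      have := (Nat.cast_le (α := ℝ)).mpr h'
      push_cast at this; linarith
    have hp0 : (0:ℝ) ≤ p := Nat.cast_nonneg p
    have h12 : 1/(4*(n:ℝ)) ≤ (2*(p:ℝ)+1)/(2*(n:ℝ)) := by
      rw [div_le_div_iff₀ (by positivity) (by positivity)]; nlinarith
    have h1 : (2*(p:ℝ)+1)/(2*(n:ℝ)) ≤ 1 := by
      rw [div_le_one (by positivity)]; nlinarith
    have hE := est f n s t hst happrox (1/(4*(n:ℝ))) ((2*(p:ℝ)+1)/(2*(n:ℝ)))
      (1/(4*(n:ℝ))) (by positivity) h12 h1 ⟨le_refl _, h12⟩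
      (zigzag_quarter n (by omega))
      (fun u hu => zigzag_lb n (by omega) u hu.1 (le_trans hu.2 (by
        rw [div_le_div_iff₀ (by positivity) (by positivity)]; nlinarith)))
    rw [zigzag_quarter n (by omega), zigzag_yp n p hn hpn] at hE
    have heq1 : (1/2 - (2:ℝ)^(3-(n:ℤ))) * Real.sqrt (t-s)
        = (1/2 + 1 - 1) * Real.sqrt (t-s)
          - 4 * (Real.sqrt (t-s) * (2:ℝ)^(1-(n:ℤ))) := by rw [hc34]; ring
    have heq2 : (1/2 + (2:ℝ)^(3-(n:ℤ))) * Real.sqrt (t-s)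
        = (1/2 + 1 - 1) * Real.sqrt (t-s)
          + 4 * (Real.sqrt (t-s) * (2:ℝ)^(1-(n:ℤ))) := by rw [hc34]; ring
    exact ⟨heq1 ▸ hE.1, heq2 ▸ hE.2⟩
  -- part (ii), ordered
  have key2 : ∀ p q : ℕ, q < p → p ≤ n - 2 →
      (1 - (2 : ℝ) ^ (3 - (n : ℤ))) * Real.sqrt (t - s) ≤
        treeDist f (s + (t - s) * ((2 * q + 1) / (2 * n)))
          (s + (t - s) * ((2 * p + 1) / (2 * n))) ∧
      treeDist f (s + (t - s) * ((2 * q + 1) / (2 * n)))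
          (s + (t - s) * ((2 * p + 1) / (2 * n))) ≤
        (1 + (2 : ℝ) ^ (3 - (n : ℤ))) * Real.sqrt (t - s) := by
    intro p q hqp hp
    have hpn : (p:ℝ) ≤ (n:ℝ) - 2 := by
      have h' : p + 2 ≤ n := by omega
      have := (Nat.cast_le (α := ℝ)).mpr h'
      push_cast at this; linarith
    have hq0 : (0:ℝ) ≤ q := Nat.cast_nonneg q
    have hqp' : (q:ℝ) + 1 ≤ (p:ℝ) := by exact_mod_cast hqp
    have hqn : (q:ℝ) ≤ (n:ℝ) - 2 := by linarith
    have h12 : (2*(q:ℝ)+1)/(2*(n:ℝ)) ≤ (2*(p:ℝ)+1)/(2*(n:ℝ)) := by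
      rw [div_le_div_iff₀ (by positivity) (by positivity)]; nlinarith
    have h1 : (2*(p:ℝ)+1)/(2*(n:ℝ)) ≤ 1 := by
      rw [div_le_one (by positivity)]; nlinarith
    have hu0 : ((q:ℝ)+1)/(n:ℝ) ∈ Icc ((2*(q:ℝ)+1)/(2*(n:ℝ))) ((2*(p:ℝ)+1)/(2*(n:ℝ))) := by
      constructor
      · rw [div_le_div_iff₀ (by positivity) (by positivity)]; nlinarith
      · rw [div_le_div_iff₀ (by positivity) (by positivity)]; nlinarith
    have hE := est f n s t hst happrox ((2*(q:ℝ)+1)/(2*(n:ℝ))) ((2*(p:ℝ)+1)/(2*(n:ℝ)))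
      (((q:ℝ)+1)/(n:ℝ)) (by positivity) h12 h1 hu0
      (zigzag_node n q hn hqn)
      (fun u hu => zigzag_lb n (by omega) u
        (le_trans (by rw [div_le_div_iff₀ (by positivity) (by positivity)]; nlinarith) hu.1)
        (le_trans hu.2 (by
          rw [div_le_div_iff₀ (by positivity) (by positivity)]; nlinarith)))
    rw [zigzag_yp n q hn hqn, zigzag_yp n p hn hpn] at hE
    have heq1 : (1 - (2:ℝ)^(3-(n:ℤ))) * Real.sqrt (t-s)
        = (1 + 1 - 1) * Real.sqrt (t-s)
          - 4 * (Real.sqrt (t-s) * (2:ℝ)^(1-(n:ℤ))) := by rw [hc34]; ring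
    have heq2 : (1 + (2:ℝ)^(3-(n:ℤ))) * Real.sqrt (t-s)
        = (1 + 1 - 1) * Real.sqrt (t-s)
          + 4 * (Real.sqrt (t-s) * (2:ℝ)^(1-(n:ℤ))) := by rw [hc34]; ring
    exact ⟨heq1 ▸ hE.1, heq2 ▸ hE.2⟩
  have part2 : ∀ p q : ℕ, p ≤ n - 2 → q ≤ n - 2 → p ≠ q →
      (1 - (2 : ℝ) ^ (3 - (n : ℤ))) * Real.sqrt (t - s) ≤
        treeDist f (s + (t - s) * ((2 * q + 1) / (2 * n)))
          (s + (t - s) * ((2 * p + 1) / (2 * n))) ∧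
      treeDist f (s + (t - s) * ((2 * q + 1) / (2 * n)))
          (s + (t - s) * ((2 * p + 1) / (2 * n))) ≤
        (1 + (2 : ℝ) ^ (3 - (n : ℤ))) * Real.sqrt (t - s) := by
    intro p q hp hq hne
    rcases Nat.lt_or_ge q p with h | h
    · exact key2 p q h hp
    · have hlt : p < q := by omega
      have h' := key2 q p hlt hq
      rw [treeDist_comm] at h'
      exact h'
  refine ⟨part1, part2, ?_, ?_, ?_, ?_⟩
  · -- the star
    refine ⟨fun i => if i = 0 then s + (t - s) * (1 / (4 * n))
        else s + (t - s) * ((2 * ((i : ℕ) - 1) + 1) / (2 * n)), by simp, fun i hi => by simp [hi],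
        ?_, ?_, ?_⟩
    · nlinarith
    · intro i j hi hj hij
      beta_reduce
      rw [if_neg hi, if_neg hj]
      have hiv : (i:ℕ) ≠ 0 := fun h => hi (Fin.ext h)
      have hjv : (j:ℕ) ≠ 0 := fun h => hj (Fin.ext h)
      have hij' : (i:ℕ) ≠ (j:ℕ) := Fin.val_ne_of_ne hij
      have hi2 : (i:ℕ) - 1 ≤ n - 2 := by have := i.isLt; omega
      have hj2 : (j:ℕ) - 1 ≤ n - 2 := by have := j.isLt; omega
      have hP := part2 ((j:ℕ)-1) ((i:ℕ)-1) hj2 hi2 (by omega)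
      have hci : ((((i:ℕ) - 1 : ℕ)):ℝ) = ((i:ℕ):ℝ) - 1 := by
        rw [Nat.cast_sub (by omega : 1 ≤ (i:ℕ))]; norm_num
      have hcj : ((((j:ℕ) - 1 : ℕ)):ℝ) = ((j:ℕ):ℝ) - 1 := by
        rw [Nat.cast_sub (by omega : 1 ≤ (j:ℕ))]; norm_num
      rw [hci, hcj] at hP
      have h1c' : (1:ℝ) - (2:ℝ)^(4-(n:ℤ)) ≠ 0 := ne_of_gt h1c
      have heq1 : ((2 + (2:ℝ)^(4-(n:ℤ))) / (1 - (2:ℝ)^(4-(n:ℤ)))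
            - ((1 + (2:ℝ)^(4-(n:ℤ))) / (1 - (2:ℝ)^(4-(n:ℤ))) - 1))
          * ((1 - (2:ℝ)^(4-(n:ℤ))) * (1/2) * Real.sqrt (t-s))
          = (1 - (2:ℝ)^(3-(n:ℤ))) * Real.sqrt (t-s) := by
        field_simp [h1c']; rw [hc43]; ring
      have heq2 : (2 + (2:ℝ)^(4-(n:ℤ))) / (1 - (2:ℝ)^(4-(n:ℤ)))
          * ((1 - (2:ℝ)^(4-(n:ℤ))) * (1/2) * Real.sqrt (t-s))
          = (1 + (2:ℝ)^(3-(n:ℤ))) * Real.sqrt (t-s) := by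
        field_simp [h1c']; rw [hc43]; ring
      rw [heq1, heq2]
      exact hP
    · intro i hi
      beta_reduce
      rw [if_pos rfl, if_neg hi]
      have hiv : (i:ℕ) ≠ 0 := fun h => hi (Fin.ext h)
      have hi2 : (i:ℕ) - 1 ≤ n - 2 := by have := i.isLt; omega
      have hP := part1 ((i:ℕ)-1) hi2
      have hci : ((((i:ℕ) - 1 : ℕ)):ℝ) = ((i:ℕ):ℝ) - 1 := by
        rw [Nat.cast_sub (by omega : 1 ≤ (i:ℕ))]; norm_num
      rw [hci] at hP
      have h1c' : (1:ℝ) - (2:ℝ)^(4-(n:ℤ)) ≠ 0 := ne_of_gt h1c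
      have heq1 : (1 - (2:ℝ)^(4-(n:ℤ))) * (1/2) * Real.sqrt (t-s)
          = (1/2 - (2:ℝ)^(3-(n:ℤ))) * Real.sqrt (t-s) := by rw [hc43]; ring
      have heq2 : (1 + ((1 + (2:ℝ)^(4-(n:ℤ))) / (1 - (2:ℝ)^(4-(n:ℤ))) - 1))
          * ((1 - (2:ℝ)^(4-(n:ℤ))) * (1/2) * Real.sqrt (t-s))
          = (1/2 + (2:ℝ)^(3-(n:ℤ))) * Real.sqrt (t-s) := by
        field_simp [h1c']; rw [hc43]; ring
      rw [heq2, heq1]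
      exact hP
  · rw [lt_div_iff₀ h1c]; linarith
  · rw [sub_pos, lt_div_iff₀ h1c]; linarith
  · have h5 : (1 + (2:ℝ)^(4-(n:ℤ))) / (1 - (2:ℝ)^(4-(n:ℤ))) ≤ 5/3 := by
      rw [div_le_iff₀ h1c]; linarith
    linarith
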